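/- Modulation ambiguity of blind FROG (Proposition 1, part 4): Let N be a positive integer, L and k₀ integers, and x₁, x₂ : ℤ/Nℤ → ℂ. Define y_m[n] = x₁[n]·x₂[n+mL]. The modulated signals x₁^{k₀}[n] = x₁[n] e^{−2πi k₀ n/N} and x₂^{k₀}[n] = x₂[n] e^{2πi k₀ n/N} satisfy x₁^{k₀}[n]·x₂^{k₀}[n+mL] = y_m[n]·e^{2πi m L k₀/N} for all n, m, and consequently the blind FROG trace of (x₁^{k₀}, x₂^{k₀}) equals that of (x₁, x₂): for every k and m, |∑_{n=0}^{N−1} x₁^{k₀}[n] x₂^{k₀}[n+mL] e^{−2πi k n/N}|² = |∑_{n=0}^{N−1} y_m[n] e^{−2πi k n/N}|². -/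

import Mathlib

open Complex Finset

/-- Discrete Fourier transform of a signal `x : ZMod N → ℂ`:
`x̂[k] = ∑_{n=0}^{N-1} x[n] e^{-2πi k n / N}`. -/
noncomputable def dft {N : ℕ} [NeZero N] (x : ZMod N → ℂ) (k : ZMod N) : ℂ :=
  ∑ n : ZMod N, x n * Complex.exp (-(2 * (Real.pi : ℂ) * Complex.I * (k.val : ℂ) * (n.val : ℂ)) / (N : ℂ))

lemma exp_congr_int (N : ℕ) [NeZero N] (k₀ a b : ℤ) (h : ((a : ZMod N)) = (b : ZMod N)) :
    Complex.exp (2 * (Real.pi : ℂ) * Complex.I * (k₀ : ℂ) * (a : ℂ) / N) =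
    Complex.exp (2 * (Real.pi : ℂ) * Complex.I * (k₀ : ℂ) * (b : ℂ) / N) := by
  obtain ⟨t, ht⟩ : (N : ℤ) ∣ b - a := ((ZMod.intCast_eq_intCast_iff _ _ _).mp h).dvd
  have hN : (N : ℂ) ≠ 0 := Nat.cast_ne_zero.mpr (NeZero.ne N)
  have hb : (b : ℂ) = (a : ℂ) + N * t := by
    have : b = a + N * t := by linarith
    rw [this]; push_cast; ring
  rw [hb, show 2 * (Real.pi : ℂ) * Complex.I * (k₀ : ℂ) * ((a : ℂ) + N * t) / N =
      2 * (Real.pi : ℂ) * Complex.I * (k₀ : ℂ) * (a : ℂ) / N + ((k₀ * t : ℤ) : ℂ) * (2 * Real.pi * Complex.I) by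
    push_cast; field_simp]
  rw [Complex.exp_add, Complex.exp_int_mul_two_pi_mul_I, mul_one]

/-- Modulation ambiguity of blind FROG (Proposition 1, part 4). -/
theorem blind_frog_modulation_ambiguity
    (N : ℕ) [NeZero N] (L k₀ : ℤ) (x₁ x₂ : ZMod N → ℂ)
    (x₁k₀ x₂k₀ : ZMod N → ℂ) (ym : ℤ → ZMod N → ℂ)
    (hy : ∀ (m : ℤ) (n : ZMod N), ym m n = x₁ n * x₂ (n + ((m * L : ℤ) : ZMod N)))
    (hx₁ : ∀ n : ZMod N,
      x₁k₀ n = x₁ n * Complex.exp (-(2 * (Real.pi : ℂ) * Complex.I * (k₀ : ℂ) * (n.val : ℂ)) / (N : ℂ)))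
    (hx₂ : ∀ n : ZMod N,
      x₂k₀ n = x₂ n * Complex.exp ((2 * (Real.pi : ℂ) * Complex.I * (k₀ : ℂ) * (n.val : ℂ)) / (N : ℂ))) :
    (∀ (m : ℤ) (n : ZMod N),
        x₁k₀ n * x₂k₀ (n + ((m * L : ℤ) : ZMod N)) =
          ym m n * Complex.exp ((2 * (Real.pi : ℂ) * Complex.I * ((m : ℂ) * (L : ℂ) * (k₀ : ℂ))) / (N : ℂ))) ∧
    (∀ (k : ZMod N) (m : ℤ),
        ‖dft (fun n => x₁k₀ n * x₂k₀ (n + ((m * L : ℤ) : ZMod N))) k‖ ^ 2 =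
          ‖dft (ym m) k‖ ^ 2) := by
  have part1 : ∀ (m : ℤ) (n : ZMod N),
      x₁k₀ n * x₂k₀ (n + ((m * L : ℤ) : ZMod N)) =
        ym m n * Complex.exp ((2 * (Real.pi : ℂ) * Complex.I * ((m : ℂ) * (L : ℂ) * (k₀ : ℂ))) / (N : ℂ)) := by
    intro m n
    set c : ZMod N := ((m * L : ℤ) : ZMod N) with hc
    set d : ℤ := ((n + c).val : ℤ) - (n.val : ℤ) with hd
    have hcast : ((d : ZMod N)) = ((m * L : ℤ) : ZMod N) := by
      rw [hd]
      push_cast [ZMod.natCast_val, ZMod.cast_id, hc]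
      ring
    have key := exp_congr_int N k₀ d (m * L) hcast
    rw [hx₁, hx₂, hy]
    have hA : (-(2 * (Real.pi : ℂ) * Complex.I * (k₀ : ℂ) * (n.val : ℂ)) / (N : ℂ)) +
        ((2 * (Real.pi : ℂ) * Complex.I * (k₀ : ℂ) * (((n + c).val : ℕ) : ℂ)) / (N : ℂ)) =
        2 * (Real.pi : ℂ) * Complex.I * (k₀ : ℂ) * (d : ℂ) / N := by
      rw [hd]; push_cast; ring
    calc x₁ n * Complex.exp (-(2 * (Real.pi : ℂ) * Complex.I * (k₀ : ℂ) * (n.val : ℂ)) / (N : ℂ)) *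
          (x₂ (n + c) * Complex.exp ((2 * (Real.pi : ℂ) * Complex.I * (k₀ : ℂ) * (((n + c).val : ℕ) : ℂ)) / (N : ℂ)))
        = x₁ n * x₂ (n + c) *
          Complex.exp (2 * (Real.pi : ℂ) * Complex.I * (k₀ : ℂ) * (d : ℂ) / N) := by
          rw [← hA, Complex.exp_add]; ring
      _ = x₁ n * x₂ (n + c) *
          Complex.exp ((2 * (Real.pi : ℂ) * Complex.I * ((m : ℂ) * (L : ℂ) * (k₀ : ℂ))) / (N : ℂ)) := by
          rw [key]; congr 1; push_cast; ring
  refine ⟨part1, ?_⟩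
  intro k m
  have hdft : dft (fun n => x₁k₀ n * x₂k₀ (n + ((m * L : ℤ) : ZMod N))) k =
      Complex.exp ((2 * (Real.pi : ℂ) * Complex.I * ((m : ℂ) * (L : ℂ) * (k₀ : ℂ))) / (N : ℂ)) *
      dft (ym m) k := by
    unfold dft
    rw [mul_sum]
    refine Finset.sum_congr rfl fun n _ => ?_
    simp only [part1]; ring
  rw [hdft, norm_mul]
  have habs : ‖Complex.exp ((2 * (Real.pi : ℂ) * Complex.I * ((m : ℂ) * (L : ℂ) * (k₀ : ℂ))) / (N : ℂ))‖ = 1 := by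
    rw [show (2 * (Real.pi : ℂ) * Complex.I * ((m : ℂ) * (L : ℂ) * (k₀ : ℂ))) / (N : ℂ) =
        ((2 * Real.pi * (m : ℝ) * (L : ℝ) * (k₀ : ℝ) / N : ℝ) : ℂ) * Complex.I by push_cast; ring]
    exact Complex.norm_exp_ofReal_mul_I _
  rw [habs, one_mul]
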